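/- Let B be a nonempty subset of Baire space ℕ → ℕ and let (≤_i)_{i<ω} be a quasi-scale on B. Define recursively a decreasing sequence of sets B_0 ⊇ B_1 ⊇ B_2 ⊇ ⋯ by: B_0 = B, and B_{n+1} = { x ∈ B_n : x is ≤_n-least in B_n (i.e., x ≤_n y for all y ∈ B_n), and x(n) is least possible among the ≤_n-least elements of B_n (i.e., x(n) ≤ y(n) for every y ∈ B_n that is ≤_n-least in B_n) }. Then: (a) each B_n is nonempty; (b) for every n, all elements of B_{n+1} agree on the coordinates 0, 1, …, n, so there is a well-defined real x* ∈ ℕ → ℕ with x*(n) equal to the common value x(n) for x ∈ B_{n+1}; (c) x* ∈ B; and (d) for every i < ω and every z ∈ B_{i+1}, x* ≤_i z. -/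
import Mathlib


/-- A quasi-norm on a set `B` of reals (elements of Baire space `ℕ → ℕ`):
a reflexive, transitive, total binary relation on `B` such that there is no
infinite strictly descending chain, where `x < y` means `le x y ∧ ¬ le y x`. -/
def IsQuasiNorm (B : Set (ℕ → ℕ)) (le : (ℕ → ℕ) → (ℕ → ℕ) → Prop) : Prop :=
  (∀ x ∈ B, le x x) ∧
  (∀ x ∈ B, ∀ y ∈ B, ∀ z ∈ B, le x y → le y z → le x z) ∧
  (∀ x ∈ B, ∀ y ∈ B, le x y ∨ le y x) ∧
  ¬ ∃ f : ℕ → (ℕ → ℕ), (∀ n, f n ∈ B) ∧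
      ∀ n, le (f (n + 1)) (f n) ∧ ¬ le (f n) (f (n + 1))

/-- A quasi-scale on `B`: a sequence of quasi-norms `le i` on `B` satisfying the
limit property and lower semi-continuity. -/
def IsQuasiScale (B : Set (ℕ → ℕ)) (le : ℕ → (ℕ → ℕ) → (ℕ → ℕ) → Prop) : Prop :=
  (∀ i, IsQuasiNorm B (le i)) ∧
  ∀ (x : ℕ → (ℕ → ℕ)) (y : ℕ → ℕ) (n : ℕ → ℕ),
    (∀ k, x k ∈ B) →
    (∀ j, ∃ N, ∀ k ≥ N, x k j = y j) →
    (∀ i, ∀ k ≥ n i, le i (x k) (x (n i)) ∧ le i (x (n i)) (x k)) →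
    y ∈ B ∧ ∀ i, le i y (x (n i))

lemma quasiNorm_exists_least {B : Set (ℕ → ℕ)} {le : (ℕ → ℕ) → (ℕ → ℕ) → Prop}
    (h : IsQuasiNorm B le) {S : Set (ℕ → ℕ)} (hS : S ⊆ B) (hne : S.Nonempty) :
    ∃ x ∈ S, ∀ y ∈ S, le x y := by
  by_contra hc
  push_neg at hc
  have key : ∀ x : S, ∃ y : S, le y x ∧ ¬ le (x : ℕ → ℕ) y := by
    rintro ⟨x, hx⟩
    obtain ⟨y, hy, hxy⟩ := hc x hx
    have := h.2.2.1 x (hS hx) y (hS hy)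
    exact ⟨⟨y, hy⟩, this.resolve_left hxy, hxy⟩
  choose F hF1 hF2 using key
  obtain ⟨x0, hx0⟩ := hne
  set f : ℕ → S := fun n => F^[n] ⟨x0, hx0⟩ with hf
  apply h.2.2.2
  refine ⟨fun n => (f n : ℕ → ℕ), fun n => hS (f n).2, fun n => ?_⟩
  have hit : f (n + 1) = F (f n) := Function.iterate_succ_apply' F n _
  simp only []
  rw [hit]
  exact ⟨hF1 (f n), hF2 (f n)⟩

/-- The "leftmost branch of minimal norms" construction: given a nonempty set `B`
carrying a quasi-scale, the recursively defined decreasing sequence of sets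
`Bs 0 = B`, `Bs (n+1) = { x ∈ Bs n : x is ≤ₙ-least in Bs n and x n is least
possible among the ≤ₙ-least elements of Bs n }` consists of nonempty sets, the
elements of `Bs (n+1)` all agree on coordinates `0, …, n`, and the resulting real
`x*` lies in `B` and satisfies `x* ≤ᵢ z` for all `z ∈ Bs (i+1)`. -/
theorem leftmost_branch_of_minimal_norms
    (B : Set (ℕ → ℕ)) (le : ℕ → (ℕ → ℕ) → (ℕ → ℕ) → Prop)
    (hB : B.Nonempty) (hqs : IsQuasiScale B le)
    (Bs : ℕ → Set (ℕ → ℕ))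
    (h0 : Bs 0 = B)
    (hsucc : ∀ n, Bs (n + 1) =
      { x ∈ Bs n | (∀ y ∈ Bs n, le n x y) ∧
          ∀ y ∈ Bs n, (∀ z ∈ Bs n, le n y z) → x n ≤ y n }) :
    (∀ n, (Bs n).Nonempty) ∧
    (∀ n, ∀ x ∈ Bs (n + 1), ∀ y ∈ Bs (n + 1), ∀ m ≤ n, x m = y m) ∧
    ∃ xstar : ℕ → ℕ,
      (∀ n, ∀ x ∈ Bs (n + 1), xstar n = x n) ∧
      xstar ∈ B ∧
      ∀ i, ∀ z ∈ Bs (i + 1), le i xstar z := by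
  -- basic inclusions
  have hsub : ∀ n, Bs (n + 1) ⊆ Bs n := by
    intro n x hx
    rw [hsucc] at hx
    exact hx.1
  have hsubB : ∀ n, Bs n ⊆ B := by
    intro n
    induction n with
    | zero => rw [h0]
    | succ n ih => exact fun x hx => ih (hsub n hx)
  have hmono : ∀ m n, m ≤ n → Bs n ⊆ Bs m := by
    intro m n hmn
    induction n with
    | zero => simp_all
    | succ n ih =>
      rcases Nat.lt_or_ge m (n + 1) with h | h
      · exact fun x hx => ih (Nat.lt_succ_iff.mp h) (hsub n hx)
      · have : m = n + 1 := le_antisymm hmn h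
        subst this
        exact fun x hx => hx
  -- (a) nonemptiness
  have hne : ∀ n, (Bs n).Nonempty := by
    intro n
    induction n with
    | zero => rw [h0]; exact hB
    | succ n ih =>
      obtain ⟨w, hw, hwle⟩ := quasiNorm_exists_least (hqs.1 n) (hsubB n) ih
      have hP : ∃ k, ∃ x ∈ Bs n, (∀ y ∈ Bs n, le n x y) ∧ x n = k :=
        ⟨w n, w, hw, hwle, rfl⟩
      classical
      obtain ⟨v, hv, hvle, hvn⟩ := Nat.find_spec hP
      refine ⟨v, ?_⟩
      rw [hsucc]
      refine ⟨hv, hvle, fun y hy hyle => ?_⟩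
      have : Nat.find hP ≤ y n := Nat.find_le ⟨y, hy, hyle, rfl⟩
      omega
  -- (b) agreement
  have hagree : ∀ n, ∀ x ∈ Bs (n + 1), ∀ y ∈ Bs (n + 1), ∀ m ≤ n, x m = y m := by
    intro n x hx y hy m hm
    have hx' : x ∈ Bs (m + 1) := hmono (m + 1) (n + 1) (by omega) hx
    have hy' : y ∈ Bs (m + 1) := hmono (m + 1) (n + 1) (by omega) hy
    rw [hsucc] at hx' hy'
    exact le_antisymm (hx'.2.2 y hy'.1 hy'.2.1) (hy'.2.2 x hx'.1 hx'.2.1)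
  -- choose witnesses
  choose xw hxw using fun n => hne (n + 1)
  set xstar : ℕ → ℕ := fun n => xw n n with hxstar
  have hval : ∀ n, ∀ x ∈ Bs (n + 1), xstar n = x n := fun n x hx =>
    hagree n (xw n) (hxw n) x hx n le_rfl
  -- norm equivalence of the witnesses
  have hnorm : ∀ i, ∀ k ≥ i, le i (xw k) (xw i) ∧ le i (xw i) (xw k) := by
    intro i k hk
    have hk' : xw k ∈ Bs (i + 1) := hmono (i + 1) (k + 1) (by omega) (hxw k)
    have hi' : xw i ∈ Bs (i + 1) := hxw i
    rw [hsucc] at hk' hi'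
    exact ⟨hk'.2.1 (xw i) hi'.1, hi'.2.1 (xw k) hk'.1⟩
  have hlim := hqs.2 xw xstar id (fun k => hsubB (k + 1) (hxw k))
    (fun j => ⟨j, fun k hk =>
      (hval j (xw k) (hmono (j + 1) (k + 1) (by omega) (hxw k))).symm⟩)
    hnorm
  refine ⟨hne, hagree, xstar, hval, hlim.1, fun i z hz => ?_⟩
  have hz' := hz
  rw [hsucc] at hz'
  have h1 : le i xstar (xw i) := hlim.2 i
  have h2 : le i (xw i) z := by
    have : xw i ∈ Bs (i + 1) := hxw i
    rw [hsucc] at this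
    exact this.2.1 z hz'.1
  exact (hqs.1 i).2.1 xstar hlim.1 (xw i) (hsubB (i + 1) (hxw i)) z
    (hsubB i hz'.1) h1 h2
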